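/- Let k be a field and Q ⊆ ℤ^d a sharp affine semigroup generating ℤ^d as a group, with semigroup algebra k[Q]. A proper monomial ideal W of k[Q] is irreducible (meaning: for all ideals I₁, I₂ of k[Q], W = I₁ ∩ I₂ implies W = I₁ or W = I₂) if and only if there exist a face F of Q and a degree α ∈ ℤ^d with (α + ℤF) ∩ Q ≠ ∅ such that W is the k-linear span of the monomials x^q with q ∈ Q and q ∉ α + F − Q, where ℤF denotes the subgroup of ℤ^d generated by F. -/

import Mathlib

open Pointwise

/-- `F` is a face of the affine semigroup (given as a subset of `ℤ^d`) `Q`: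
it is cut out of `Q` by a `ℤ`-linear functional that is nonnegative on `Q`. -/
def IsFaceOf {d : ℕ} (Q F : Set (Fin d → ℤ)) : Prop :=
  ∃ lam : (Fin d → ℤ) →ₗ[ℤ] ℤ, (∀ q ∈ Q, 0 ≤ lam q) ∧ F = {q | q ∈ Q ∧ lam q = 0}

open Pointwise

private theorem stmt7_farkas {V : Type*} [AddCommGroup V] [Module ℚ V] :
    ∀ (m : ℕ) (v : Fin m → V) (b : V),
      (¬ ∃ c : Fin m → ℚ, (∀ i, 0 ≤ c i) ∧ b = ∑ i, c i • v i) →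
      ∃ μ : Module.Dual ℚ V, μ b < 0 ∧ ∀ i, 0 ≤ μ (v i) := by
  intro m
  induction m with
  | zero =>
    intro v b hb
    have hb0 : b ≠ 0 := by
      rintro rfl
      exact hb ⟨0, fun i => le_refl 0, by simp⟩
    have : ¬ (∀ φ : Module.Dual ℚ V, φ b = 0) := by
      rw [Module.forall_dual_apply_eq_zero_iff]; exact hb0
    push_neg at this
    obtain ⟨φ, hφ⟩ := this
    rcases lt_or_gt_of_ne hφ with h | h
    · exact ⟨φ, h, fun i => i.elim0⟩
    · exact ⟨-φ, by simpa using h, fun i => i.elim0⟩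
  | succ m IH =>
    intro v b hb
    set u : Fin m → V := fun i => v i.castSucc with hu
    set w : V := v (Fin.last m) with hw
    have hb' : ¬ ∃ c : Fin m → ℚ, (∀ i, 0 ≤ c i) ∧ b = ∑ i, c i • u i := by
      rintro ⟨c, hc, rfl⟩
      refine hb ⟨Fin.snoc c 0, ?_, ?_⟩
      · intro i
        refine Fin.lastCases ?_ ?_ i
        · simp
        · intro j; simpa using hc j
      · rw [Fin.sum_univ_castSucc]
        simp [Fin.snoc_castSucc]
        rfl
    obtain ⟨μ, hμb, hμu⟩ := IH u b hb'
    by_cases hμw : 0 ≤ μ w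
    · refine ⟨μ, hμb, fun i => ?_⟩
      refine Fin.lastCases ?_ ?_ i
      · exact hμw
      · exact hμu
    push_neg at hμw
    set b' : V := μ w • b - μ b • w with hb'def
    set u' : Fin m → V := fun i => μ w • u i - μ (u i) • w with hu'
    have hBnot : ¬ ∃ c : Fin m → ℚ, (∀ i, 0 ≤ c i) ∧ b' = ∑ i, c i • u' i := by
      rintro ⟨c, hc, hrep⟩
      set t : ℚ := (μ b - ∑ i, c i * μ (u i)) / μ w with ht
      have htpos : 0 ≤ t := by
        have h1 : μ b < 0 := hμb
        have h2 : 0 ≤ ∑ i, c i * μ (u i) :=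
          Finset.sum_nonneg fun i _ => mul_nonneg (hc i) (hμu i)
        rw [ht]
        have hnum : μ b - ∑ i, c i * μ (u i) ≤ 0 := by linarith
        exact div_nonneg_of_nonpos hnum (le_of_lt hμw)
      have hbrep : b = ∑ i, c i • u i + t • w := by
        have hμw0 : μ w ≠ 0 := ne_of_lt hμw
        have : μ w • b = μ w • (∑ i, c i • u i + t • w) := by
          rw [smul_add]
          have h1 : μ w • ∑ i, c i • u i
              = ∑ i, c i • u' i + (∑ i, c i * μ (u i)) • w := by
            rw [hu', Finset.smul_sum, Finset.sum_smul]
            rw [← Finset.sum_add_distrib]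
            apply Finset.sum_congr rfl
            intro i _
            rw [smul_sub, smul_comm]
            rw [mul_smul]
            abel
          rw [h1, ← hrep, hb'def]
          have h2 : μ w • (t • w) = (μ b - ∑ i, c i * μ (u i)) • w := by
            rw [smul_smul, ht, mul_div_cancel₀ _ hμw0]
          rw [h2]
          module
        exact smul_right_injective V hμw0 this
      refine hb ⟨Fin.snoc c t, ?_, ?_⟩
      · intro i
        refine Fin.lastCases ?_ ?_ i
        · simpa using htpos
        · intro j; simpa using hc j
      · rw [Fin.sum_univ_castSucc]
        simpa [Fin.snoc_castSucc] using hbrep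
    obtain ⟨ν, hνb, hνu⟩ := IH u' b' hBnot
    refine ⟨μ w • ν - ν w • μ, ?_, ?_⟩
    · have : (μ w • ν - ν w • μ) b = ν b' := by
        simp [hb'def, map_sub, map_smul, smul_eq_mul]; ring
      rw [this]; exact hνb
    · intro i
      refine Fin.lastCases ?_ ?_ i
      · simp [smul_eq_mul, ← hw, mul_comm]
      · intro j
        have : (μ w • ν - ν w • μ) (v j.castSucc) = ν (u' j) := by
          simp [hu', map_sub, map_smul, smul_eq_mul, hu]; ring
        rw [this]; exact hνu j

private theorem stmt7_stiemke {V : Type*} [AddCommGroup V] [Module ℚ V]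
    (m : ℕ) (v : Fin m → V)
    (h : ∀ c : Fin m → ℚ, (∀ i, 0 ≤ c i) → ∑ i, c i • v i = 0 → ∀ i, c i = 0) :
    ∃ μ : Module.Dual ℚ V, ∀ i, 0 < μ (v i) := by
  set v' : Fin m → (V × ℚ) := fun i => (v i, -1) with hv'
  set b : V × ℚ := (0, -1) with hbdef
  have hnot : ¬ ∃ c : Fin m → ℚ, (∀ i, 0 ≤ c i) ∧ b = ∑ i, c i • v' i := by
    rintro ⟨c, hc, hrep⟩
    have h1 : (0 : V) = ∑ i, c i • v i := by
      have := congrArg Prod.fst hrep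
      simpa [hv', Prod.fst_sum] using this
    have h2 : (-1 : ℚ) = ∑ i, c i • (-1 : ℚ) := by
      have := congrArg Prod.snd hrep
      simpa [hv', hbdef, Prod.snd_sum] using this
    have hz : ∀ i, c i = 0 := h c hc h1.symm
    have : (-1 : ℚ) = 0 := h2.trans (Finset.sum_eq_zero fun i _ => by simp [hz i])
    norm_num at this
  obtain ⟨μ, hμb, hμv⟩ := stmt7_farkas m v' b hnot
  set inl : V →ₗ[ℚ] V × ℚ := LinearMap.inl ℚ V ℚ
  refine ⟨μ.comp inl, fun i => ?_⟩
  have hs : 0 < μ (0, 1) := by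
    have hx : μ b = -μ (0, 1) := by
      rw [hbdef]
      have hy : ((0 : V), (-1 : ℚ)) = -((0 : V), (1 : ℚ)) := by simp [Prod.ext_iff]
      rw [hy, map_neg]
    rw [hx] at hμb
    linarith
  have hsplit : (v i, (0:ℚ)) = v' i + (0, 1) := by simp [hv', Prod.ext_iff]
  have : μ.comp inl (v i) = μ (v' i) + μ (0, 1) := by
    simp only [LinearMap.comp_apply]
    have : inl (v i) = v' i + (0, 1) := by simpa [inl] using hsplit
    rw [this, map_add]
  rw [this]
  have := hμv i
  linarith
open Pointwise

private theorem stmt7_clear (N : ℕ) (q : ℚ) (h : q.den ∣ N) :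
    ∃ z : ℤ, (z : ℚ) = (N : ℚ) * q := by
  obtain ⟨M, hM⟩ := h
  refine ⟨M * q.num, ?_⟩
  subst hM
  push_cast
  rw [mul_comm (q.den : ℚ) (M : ℚ), mul_assoc, mul_comm (q.den : ℚ) q, Rat.mul_den_eq_num]

private theorem stmt7_face {d : ℕ} (Q : AddSubmonoid (Fin d → ℤ)) (s : Finset (Fin d → ℤ))
    (hs : AddSubmonoid.closure (↑s : Set (Fin d → ℤ)) = Q)
    (F : Set (Fin d → ℤ))
    (hFQ : F ⊆ (Q : Set (Fin d → ℤ)))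
    (hF0 : (0 : Fin d → ℤ) ∈ F)
    (hFadd : ∀ a ∈ F, ∀ b ∈ F, a + b ∈ F)
    (hFface : ∀ p ∈ (Q : Set (Fin d → ℤ)), ∀ q ∈ (Q : Set (Fin d → ℤ)), p + q ∈ F → p ∈ F) :
    ∃ lam : (Fin d → ℤ) →ₗ[ℤ] ℤ, (∀ q ∈ Q, 0 ≤ lam q) ∧ F = {q | q ∈ Q ∧ lam q = 0} := by
  classical
  have hsQ : (↑s : Set (Fin d → ℤ)) ⊆ (Q : Set (Fin d → ℤ)) := by
    rw [← hs]; exact AddSubmonoid.subset_closure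
  -- the embedding into ℚ^d
  set jA : (Fin d → ℤ) →+ (Fin d → ℚ) :=
    { toFun := fun x i => (x i : ℚ)
      map_zero' := by ext i; simp
      map_add' := by intro x y; ext i; simp } with hjA
  set j : (Fin d → ℤ) →ₗ[ℤ] (Fin d → ℚ) := jA.toIntLinearMap with hj
  have hjapp : ∀ (x : Fin d → ℤ) (i : Fin d), j x i = (x i : ℚ) := fun x i => rfl
  have hjinj : Function.Injective j := by
    intro x y hxy
    ext i
    have h := congrFun hxy i
    rw [hjapp, hjapp] at h
    exact_mod_cast h
  set U : Submodule ℚ (Fin d → ℚ) := Submodule.span ℚ (⇑j '' F) with hU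
  -- the monoid F as an AddSubmonoid
  set Fmon : AddSubmonoid (Fin d → ℤ) :=
    { carrier := F
      add_mem' := fun ha hb => hFadd _ ha _ hb
      zero_mem' := hF0 } with hFmon
  have hnsmulF : ∀ (n : ℕ) (f : Fin d → ℤ), f ∈ F → (n : ℤ) • f ∈ F := by
    intro n
    induction n with
    | zero => intro f hf; simpa using hF0
    | succ n ih =>
      intro f hf
      have : ((n+1 : ℕ) : ℤ) • f = (n : ℤ) • f + f := by push_cast; rw [add_smul, one_smul]
      rw [this]
      exact hFadd _ (ih f hf) _ hf
  have hnsmulQ : ∀ (n : ℕ) (x : Fin d → ℤ), x ∈ Q → (n : ℤ) • x ∈ Q := by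
    intro n
    induction n with
    | zero => intro x hx; simpa using Q.zero_mem
    | succ n ih =>
      intro x hx
      have : ((n+1 : ℕ) : ℤ) • x = (n : ℤ) • x + x := by push_cast; rw [add_smul, one_smul]
      rw [this]
      exact Q.add_mem (ih x hx) hx
  -- the non-face generators
  set nf : Finset (Fin d → ℤ) := s.filter (· ∉ F) with hnf
  set m : ℕ := nf.card with hm
  set e : Fin m ≃ {x // x ∈ nf} := nf.equivFin.symm with he
  set v : Fin m → ((Fin d → ℚ) ⧸ U) := fun i => U.mkQ (j ((e i) : Fin d → ℤ)) with hv
  -- Stiemke hypothesis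
  have hstiemke : ∀ c : Fin m → ℚ, (∀ i, 0 ≤ c i) → ∑ i, c i • v i = 0 → ∀ i, c i = 0 := by
    intro c hc hsum
    by_contra hne
    push_neg at hne
    obtain ⟨i₀, hi₀⟩ := hne
    have hi₀pos : 0 < c i₀ := lt_of_le_of_ne (hc i₀) (Ne.symm hi₀)
    -- the combination lies in U
    have hx : ∑ i, c i • j ((e i) : Fin d → ℤ) ∈ U := by
      have : U.mkQ (∑ i, c i • j ((e i) : Fin d → ℤ)) = 0 := by
        rw [map_sum]
        simpa [hv] using hsum
      rwa [← Submodule.Quotient.mk_eq_zero, ← Submodule.mkQ_apply]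
    rw [hU, Finsupp.mem_span_image_iff_linearCombination] at hx
    obtain ⟨l, hlsupp, hlsum⟩ := hx
    rw [Finsupp.mem_supported] at hlsupp
    -- clear denominators
    set N : ℕ := (∏ i, (c i).den) * (∏ f ∈ l.support, (l f).den) with hN
    have hNpos : 0 < N := by
      apply Nat.mul_pos <;>
      · apply Finset.prod_pos
        intro i _
        exact (Rat.den_pos _)
    have hcden : ∀ i : Fin m, (c i).den ∣ N := fun i =>
      Dvd.dvd.mul_right (Finset.dvd_prod_of_mem _ (Finset.mem_univ i)) _
    have hlden : ∀ f ∈ l.support, (l f).den ∣ N := fun f hf =>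
      Dvd.dvd.mul_left (Finset.dvd_prod_of_mem _ hf) _
    choose zc hzc using fun i : Fin m => stmt7_clear N (c i) (hcden i)
    have hzcnn : ∀ i, 0 ≤ zc i := by
      intro i
      have : (0 : ℚ) ≤ (zc i : ℚ) := by
        rw [hzc i]
        exact mul_nonneg (by positivity) (hc i)
      exact_mod_cast this
    have hzci₀ : 0 < zc i₀ := by
      have : (0 : ℚ) < (zc i₀ : ℚ) := by
        rw [hzc i₀]
        apply mul_pos (by exact_mod_cast hNpos) hi₀pos
      exact_mod_cast this
    choose zl hzl using fun f : {x // x ∈ l.support} => stmt7_clear N (l f) (hlden f f.2)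
    -- the integral relation
    have hkey : ∑ i, zc i • ((e i : Fin d → ℤ)) =
        ∑ f ∈ l.support.attach, zl f • (f : Fin d → ℤ) := by
      apply hjinj
      rw [map_sum, map_sum]
      have lhs : ∑ i, j (zc i • ((e i : Fin d → ℤ))) = (N : ℚ) • ∑ i, c i • j ((e i : Fin d → ℤ)) := by
        rw [Finset.smul_sum]
        apply Finset.sum_congr rfl
        intro i _
        rw [map_smul, ← Int.cast_smul_eq_zsmul ℚ, hzc i, smul_smul]
      have rhs : ∑ f ∈ l.support.attach, j (zl f • (f : Fin d → ℤ))
          = (N : ℚ) • ∑ i, c i • j ((e i : Fin d → ℤ)) := by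
        rw [← hlsum, Finsupp.linearCombination_apply, Finsupp.sum, Finset.smul_sum,
          ← Finset.sum_attach l.support (fun x => (N : ℚ) • (l x • j x))]
        apply Finset.sum_congr rfl
        intro f _
        rw [map_smul, ← Int.cast_smul_eq_zsmul ℚ, hzl f, smul_smul]
      rw [lhs, rhs]
    -- split signs on the right side
    have hsplit : ∑ f ∈ l.support.attach, zl f • (f : Fin d → ℤ)
        = ∑ f ∈ l.support.attach, ((zl f).toNat : ℤ) • (f : Fin d → ℤ)
          - ∑ f ∈ l.support.attach, (((-zl f).toNat : ℤ)) • (f : Fin d → ℤ) := by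
      rw [← Finset.sum_sub_distrib]
      apply Finset.sum_congr rfl
      intro f _
      rw [← sub_smul]
      congr 1
      omega
    have hrel : ∑ i, zc i • ((e i : Fin d → ℤ))
        + ∑ f ∈ l.support.attach, (((-zl f).toNat : ℤ)) • (f : Fin d → ℤ)
        = ∑ f ∈ l.support.attach, ((zl f).toNat : ℤ) • (f : Fin d → ℤ) := by
      rw [hkey, hsplit]; abel
    have hFf : ∀ f : {x // x ∈ l.support}, (f : Fin d → ℤ) ∈ F := fun f => hlsupp f.2
    have hrightF : ∑ f ∈ l.support.attach, ((zl f).toNat : ℤ) • (f : Fin d → ℤ) ∈ F := by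
      apply AddSubmonoid.sum_mem Fmon
      intro f _
      exact hnsmulF _ _ (hFf f)
    -- extract the generator e i₀
    set a₀ : Fin d → ℤ := (e i₀ : Fin d → ℤ) with ha₀
    have ha₀nf : a₀ ∈ nf := (e i₀).2
    have ha₀s : a₀ ∈ s := (Finset.mem_filter.mp ha₀nf).1
    have ha₀nF : a₀ ∉ F := by
      have := (Finset.mem_filter.mp ha₀nf).2
      simpa using this
    have ha₀Q : a₀ ∈ Q := hsQ ha₀s
    set rest : Fin d → ℤ := (zc i₀ - 1) • a₀ + ∑ i ∈ Finset.univ.erase i₀, zc i • ((e i : Fin d → ℤ))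
      + ∑ f ∈ l.support.attach, (((-zl f).toNat : ℤ)) • (f : Fin d → ℤ) with hrest
    have hrestQ : rest ∈ Q := by
      apply Q.add_mem
      apply Q.add_mem
      · have : (zc i₀ - 1) • a₀ = (((zc i₀ - 1).toNat : ℤ)) • a₀ := by
          congr 1; have := hzci₀; omega
        rw [this]
        exact hnsmulQ _ _ ha₀Q
      · apply AddSubmonoid.sum_mem
        intro i _
        have : zc i • ((e i : Fin d → ℤ)) = (((zc i).toNat : ℤ)) • ((e i : Fin d → ℤ)) := by
          congr 1; have := hzcnn i; omega
        rw [this]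
        exact hnsmulQ _ _ (hsQ (Finset.mem_filter.mp (e i).2).1)
      · apply AddSubmonoid.sum_mem
        intro f _
        exact hnsmulQ _ _ (hFQ (hFf f))
    have hsum_eq : a₀ + rest = ∑ f ∈ l.support.attach, ((zl f).toNat : ℤ) • (f : Fin d → ℤ) := by
      have h1 : ∑ i, zc i • ((e i : Fin d → ℤ))
          = zc i₀ • a₀ + ∑ i ∈ Finset.univ.erase i₀, zc i • ((e i : Fin d → ℤ)) :=
        (Finset.add_sum_erase _ (fun i => zc i • ((e i : Fin d → ℤ))) (Finset.mem_univ i₀)).symm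
      have h2 : zc i₀ • a₀ = a₀ + (zc i₀ - 1) • a₀ := by
        nth_rewrite 1 [show zc i₀ = 1 + (zc i₀ - 1) by ring]
        rw [add_smul, one_smul]
      rw [← hrel, h1, h2, hrest]
      abel
    exact ha₀nF (hFface a₀ ha₀Q rest hrestQ (by rw [hsum_eq]; exact hrightF))
  obtain ⟨μ, hμ⟩ := stmt7_stiemke m v hstiemke
  -- the rational functional on ℤ^d
  set LL : (Fin d → ℤ) →ₗ[ℤ] ℚ := ((μ.comp U.mkQ).restrictScalars ℤ).comp j with hLL
  have hLLF : ∀ f ∈ F, LL f = 0 := by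
    intro f hf
    have : j f ∈ U := Submodule.subset_span ⟨f, hf, rfl⟩
    simp only [hLL, LinearMap.comp_apply, LinearMap.restrictScalars_apply]
    rw [Submodule.mkQ_apply, (Submodule.Quotient.mk_eq_zero U).mpr this, map_zero]
  have hLLpos : ∀ a ∈ s, a ∉ F → 0 < LL a := by
    intro a has hanF
    have hanf : a ∈ nf := Finset.mem_filter.mpr ⟨has, by simpa using hanF⟩
    have := hμ (e.symm ⟨a, hanf⟩)
    simpa [hv, hLL] using this
  -- clear denominators of LL on the standard basis
  set N : ℕ := ∏ i, (LL (Pi.single i 1)).den with hN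
  have hNpos : 0 < N := Finset.prod_pos fun i _ => Rat.den_pos _
  choose zb hzb using fun i : Fin d =>
    stmt7_clear N (LL (Pi.single i 1)) (Finset.dvd_prod_of_mem _ (Finset.mem_univ i))
  set lam : (Fin d → ℤ) →ₗ[ℤ] ℤ := ∑ i, zb i • LinearMap.proj i with hlam
  have hlamsingle : ∀ i : Fin d, lam (Pi.single i 1) = zb i := by
    intro i
    rw [hlam]
    rw [LinearMap.sum_apply]
    rw [Finset.sum_eq_single i]
    · simp [LinearMap.proj_apply]
    · intro j _ hji
      simp [LinearMap.proj_apply, Pi.single_apply, Ne.symm hji]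
    · intro h; exact absurd (Finset.mem_univ i) h
  have hcast : ∀ x : Fin d → ℤ, (lam x : ℚ) = (N : ℚ) * LL x := by
    intro x
    have hxdecomp : x = ∑ i, (x i) • Pi.single i (1 : ℤ) := by
      conv_lhs => rw [← Finset.univ_sum_single x]
      apply Finset.sum_congr rfl
      intro i _
      rw [← Pi.single_smul, smul_eq_mul, mul_one]
    rw [hxdecomp, map_sum, map_sum]
    push_cast
    rw [Finset.mul_sum]
    apply Finset.sum_congr rfl
    intro i _
    rw [map_smul, map_smul, hlamsingle i, smul_eq_mul, zsmul_eq_mul]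
    push_cast
    rw [hzb i]
    ring
  have hlampos : ∀ a ∈ s, a ∉ F → 0 < lam a := by
    intro a has hanF
    have : (0 : ℚ) < (lam a : ℚ) := by
      rw [hcast]
      exact mul_pos (by exact_mod_cast hNpos) (hLLpos a has hanF)
    exact_mod_cast this
  have hlamF : ∀ f ∈ F, lam f = 0 := by
    intro f hf
    have : (lam f : ℚ) = 0 := by rw [hcast, hLLF f hf, mul_zero]
    exact_mod_cast this
  have hlamnn : ∀ q ∈ Q, 0 ≤ lam q := by
    intro q hq
    rw [← hs] at hq
    induction hq using AddSubmonoid.closure_induction with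
    | mem x hx =>
      by_cases hxF : x ∈ F
      · rw [hlamF x hxF]
      · exact le_of_lt (hlampos x hx hxF)
    | zero => simp
    | add x y hx hy ihx ihy =>
      rw [map_add]
      exact add_nonneg ihx ihy
  refine ⟨lam, hlamnn, ?_⟩
  apply Set.eq_of_subset_of_subset
  · intro f hf
    exact ⟨hFQ hf, hlamF f hf⟩
  · rintro q ⟨hqQ, hq0⟩
    have hqQ' : q ∈ AddSubmonoid.closure (↑s : Set (Fin d → ℤ)) := by rw [hs]; exact hqQ
    have main : ∀ x, x ∈ AddSubmonoid.closure (↑s : Set (Fin d → ℤ)) → lam x = 0 → x ∈ F := by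
      intro x hx
      induction hx using AddSubmonoid.closure_induction with
      | mem y hy =>
        intro h0
        by_cases hyF : y ∈ F
        · exact hyF
        · exact absurd h0 (by have := hlampos y hy hyF; omega)
      | zero => intro _; exact hF0
      | add x y hx hy ihx ihy =>
        intro h0
        have hxQ : x ∈ Q := by rw [← hs]; exact hx
        have hyQ : y ∈ Q := by rw [← hs]; exact hy
        have h1 : 0 ≤ lam x := hlamnn x hxQ
        have h2 : 0 ≤ lam y := hlamnn y hyQ
        rw [map_add] at h0
        have hx0 : lam x = 0 := by omega
        have hy0 : lam y = 0 := by omega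
        exact hFadd _ (ihx hx0) _ (ihy hy0)
    exact main q hqQ' hq0
open Pointwise

/-- The subgroup generated by an "add-closed set containing 0" consists of differences. -/
private theorem stmt7_closure_sub {d : ℕ} (F : Set (Fin d → ℤ))
    (hF0 : (0 : Fin d → ℤ) ∈ F) (hFadd : ∀ a ∈ F, ∀ b ∈ F, a + b ∈ F) :
    ∀ z ∈ AddSubgroup.closure F, ∃ u ∈ F, ∃ w ∈ F, z = u - w := by
  intro z hz
  induction hz using AddSubgroup.closure_induction with
  | mem x hx => exact ⟨x, hx, 0, hF0, by simp⟩
  | zero => exact ⟨0, hF0, 0, hF0, by simp⟩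
  | add x y hx hy ihx ihy =>
    obtain ⟨u1, hu1, w1, hw1, rfl⟩ := ihx
    obtain ⟨u2, hu2, w2, hw2, rfl⟩ := ihy
    exact ⟨u1 + u2, hFadd _ hu1 _ hu2, w1 + w2, hFadd _ hw1 _ hw2, by abel⟩
  | neg x hx ihx =>
    obtain ⟨u, hu, w, hw, rfl⟩ := ihx
    exact ⟨w, hw, u, hu, by abel⟩

/-- The ideal of a "co-ideal complement" of monomials. -/
private def stmt7_idealOf (k : Type*) [Field k] {d : ℕ} (Q : AddSubmonoid (Fin d → ℤ))
    (X : Set (Fin d → ℤ))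
    (hX : ∀ x ∈ (Q : Set (Fin d → ℤ)), ∀ r ∈ (Q : Set (Fin d → ℤ)), x + r ∈ X → x ∈ X) :
    Ideal (AddMonoidAlgebra k ↥Q) where
  carrier := {f | ∀ q ∈ f.coeff.support, (q : Fin d → ℤ) ∉ X}
  add_mem' := by
    classical
    intro a b ha hb q hq
    rw [AddMonoidAlgebra.coeff_add] at hq
    rcases Finset.mem_union.mp (Finsupp.support_add hq) with h | h
    · exact ha q h
    · exact hb q h
  zero_mem' := by simp
  smul_mem' := by
    classical
    intro c f hf q hq hqX
    rw [smul_eq_mul] at hq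
    obtain ⟨q₁, _, q₂, hq₂, hq12⟩ := Finset.mem_add.mp (AddMonoidAlgebra.support_coeff_mul_subset c f hq)
    apply hf q₂ hq₂
    apply hX (q₂ : Fin d → ℤ) q₂.2 (q₁ : Fin d → ℤ) q₁.2
    have : ((q₂ + q₁ : ↥Q) : Fin d → ℤ) = (q₂ : Fin d → ℤ) + (q₁ : Fin d → ℤ) := rfl
    rw [← this, add_comm q₂ q₁, hq12]
    exact hqX

private theorem stmt7_mem_idealOf (k : Type*) [Field k] {d : ℕ} (Q : AddSubmonoid (Fin d → ℤ))
    (X : Set (Fin d → ℤ)) (hX : ∀ x ∈ (Q : Set (Fin d → ℤ)), ∀ r ∈ (Q : Set (Fin d → ℤ)), x + r ∈ X → x ∈ X)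
    (f : AddMonoidAlgebra k ↥Q) :
    f ∈ stmt7_idealOf k Q X hX ↔ ∀ q ∈ f.coeff.support, (q : Fin d → ℤ) ∉ X := Iff.rfl

/-- The span of a set of monomials, as a set. -/
private theorem stmt7_span_eq (k : Type*) [Field k] {d : ℕ} (Q : AddSubmonoid (Fin d → ℤ))
    (P : ↥Q → Prop) :
    ((Submodule.span k {f : AddMonoidAlgebra k ↥Q | ∃ q : ↥Q, P q ∧
        f = AddMonoidAlgebra.single q (1 : k)} : Submodule k (AddMonoidAlgebra k ↥Q)) : Set (AddMonoidAlgebra k ↥Q))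
      = {f : AddMonoidAlgebra k ↥Q | ∀ q ∈ f.coeff.support, P q} := by
  have hset : {f : AddMonoidAlgebra k ↥Q | ∃ q : ↥Q, P q ∧ f = AddMonoidAlgebra.single q (1 : k)}
      = (fun q : ↥Q => AddMonoidAlgebra.single q (1 : k)) '' {q | P q} := by
    ext f
    constructor
    · rintro ⟨q, hq, rfl⟩; exact ⟨q, hq, rfl⟩
    · rintro ⟨q, hq, rfl⟩; exact ⟨q, hq, rfl⟩
  rw [hset, ← AddMonoidAlgebra.supported_eq_span_single]
  ext f
  rw [SetLike.mem_coe, AddMonoidAlgebra.mem_supported]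
  constructor
  · intro h q hq; exact h hq
  · intro h q hq; exact h q hq
open Pointwise

theorem stmt7 {d : ℕ} (k : Type*) [Field k]
    (Q : AddSubmonoid (Fin d → ℤ)) (hfg : Q.FG)
    (hsharp : (Q : Set (Fin d → ℤ)) ∩ (-(Q : Set (Fin d → ℤ))) = {0})
    (hgen : AddSubgroup.closure (Q : Set (Fin d → ℤ)) = ⊤)
    (W : Ideal (AddMonoidAlgebra k ↥Q)) (hproper : W ≠ ⊤)
    (hmono : (W : Set (AddMonoidAlgebra k ↥Q)) =
      (Submodule.span k {f | f ∈ W ∧ ∃ q : ↥Q, f = AddMonoidAlgebra.single q (1 : k)} :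
        Submodule k (AddMonoidAlgebra k ↥Q))) :
    (∀ I₁ I₂ : Ideal (AddMonoidAlgebra k ↥Q), W = I₁ ⊓ I₂ → W = I₁ ∨ W = I₂) ↔
      ∃ (F : Set (Fin d → ℤ)) (α : Fin d → ℤ),
        IsFaceOf (Q : Set (Fin d → ℤ)) F ∧
        ((α +ᵥ (AddSubgroup.closure F : Set (Fin d → ℤ))) ∩ (Q : Set (Fin d → ℤ))).Nonempty ∧
        (W : Set (AddMonoidAlgebra k ↥Q)) =
          (Submodule.span k {f | ∃ q : ↥Q,
              (q : Fin d → ℤ) ∉ α +ᵥ (F - (Q : Set (Fin d → ℤ))) ∧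
              f = AddMonoidAlgebra.single q (1 : k)} :
            Submodule k (AddMonoidAlgebra k ↥Q)) := by
  classical
  set Qs : Set (Fin d → ℤ) := (Q : Set (Fin d → ℤ)) with hQs
  -- membership criterion for W coming from `hmono`
  have hset : {f : AddMonoidAlgebra k ↥Q | f ∈ W ∧ ∃ q : ↥Q, f = AddMonoidAlgebra.single q (1 : k)}
      = {f : AddMonoidAlgebra k ↥Q | ∃ q : ↥Q, (AddMonoidAlgebra.single q (1 : k) ∈ W) ∧
          f = AddMonoidAlgebra.single q (1 : k)} := by
    ext f
    constructor
    · rintro ⟨hfW, q, rfl⟩; exact ⟨q, hfW, rfl⟩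
    · rintro ⟨q, hq, rfl⟩; exact ⟨hq, q, rfl⟩
  have hWchar : (W : Set (AddMonoidAlgebra k ↥Q))
      = {f : AddMonoidAlgebra k ↥Q | ∀ q ∈ f.coeff.support, AddMonoidAlgebra.single q (1 : k) ∈ W} := by
    rw [hmono, hset, stmt7_span_eq]
  have hmemW : ∀ f : AddMonoidAlgebra k ↥Q,
      f ∈ W ↔ ∀ q ∈ f.coeff.support, AddMonoidAlgebra.single q (1 : k) ∈ W := by
    intro f
    constructor
    · intro hf
      have : f ∈ (W : Set (AddMonoidAlgebra k ↥Q)) := hf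
      rw [hWchar] at this
      exact this
    · intro hf
      have : f ∈ {f : AddMonoidAlgebra k ↥Q | ∀ q ∈ f.coeff.support, AddMonoidAlgebra.single q (1 : k) ∈ W} := hf
      rw [← hWchar] at this
      exact this
  -- the set of "standard monomials" in ℤ^d
  set T : Set (Fin d → ℤ) :=
    {x | ∃ hx : x ∈ Q, AddMonoidAlgebra.single (⟨x, hx⟩ : ↥Q) (1 : k) ∉ W} with hT
  have hsingleT : ∀ q : ↥Q, ((q : Fin d → ℤ) ∈ T ↔ AddMonoidAlgebra.single q (1 : k) ∉ W) := by
    intro q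
    constructor
    · rintro ⟨hx, h⟩
      rwa [Subtype.coe_eta] at h
    · intro h
      exact ⟨q.2, by rwa [Subtype.coe_eta]⟩
  have hTQ : T ⊆ Qs := by rintro x ⟨hx, _⟩; exact hx
  have hmemW' : ∀ f : AddMonoidAlgebra k ↥Q, f ∈ W ↔ ∀ q ∈ f.coeff.support, ((q : Fin d → ℤ) ∉ T) := by
    intro f
    rw [hmemW f]
    constructor
    · intro h q hq hT'
      exact ((hsingleT q).mp hT') (h q hq)
    · intro h q hq
      by_contra hW'
      exact h q hq ((hsingleT q).mpr hW')
  have hTco : ∀ x ∈ Qs, ∀ r ∈ Qs, x + r ∈ T → x ∈ T := by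
    intro x hx r hr hxr
    rw [show x = ((⟨x, hx⟩ : ↥Q) : Fin d → ℤ) from rfl, hsingleT]
    intro hxW
    have : AddMonoidAlgebra.single ((⟨x, hx⟩ : ↥Q) + (⟨r, hr⟩ : ↥Q)) (1 : k) ∈ W := by
      have := Ideal.mul_mem_right (AddMonoidAlgebra.single (⟨r, hr⟩ : ↥Q) (1 : k)) W hxW
      rwa [AddMonoidAlgebra.single_mul_single, mul_one] at this
    have hmem : (x + r) ∈ T := hxr
    rw [show x + r = (((⟨x, hx⟩ : ↥Q) + (⟨r, hr⟩ : ↥Q) : ↥Q) : Fin d → ℤ) from rfl, hsingleT] at hmem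
    exact hmem this
  constructor
  · -- irreducible → standard form
    intro hirr
    -- T is nonempty
    have hTne : T.Nonempty := by
      by_contra hemp
      rw [Set.not_nonempty_iff_eq_empty] at hemp
      apply hproper
      rw [Ideal.eq_top_iff_one]
      rw [hmemW']
      intro q _ hqT
      rw [hemp] at hqT
      exact hqT
    -- binary union irreducibility for co-ideals
    have hunion : ∀ X Y : Set (Fin d → ℤ),
        (∀ x ∈ Qs, ∀ r ∈ Qs, x + r ∈ X → x ∈ X) →
        (∀ x ∈ Qs, ∀ r ∈ Qs, x + r ∈ Y → x ∈ Y) →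
        X ⊆ T → Y ⊆ T → T ⊆ X ∪ Y → T = X ∨ T = Y := by
      intro X Y hXco hYco hXT hYT hcover
      have hWXY : W = stmt7_idealOf k Q X hXco ⊓ stmt7_idealOf k Q Y hYco := by
        ext f
        rw [hmemW' f]
        constructor
        · intro h
          constructor
          · intro q hq hqX; exact h q hq (hXT hqX)
          · intro q hq hqY; exact h q hq (hYT hqY)
        · rintro ⟨h1, h2⟩ q hq hqT
          rcases hcover hqT with h | h
          · exact h1 q hq h
          · exact h2 q hq h
      rcases hirr _ _ hWXY with h | h
      · left
        apply Set.eq_of_subset_of_subset _ hXT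
        intro x hx
        obtain ⟨hxQ, hxW⟩ := hx
        by_contra hxX
        apply hxW
        rw [h, stmt7_mem_idealOf]
        intro q hq
        have hq' := Finsupp.support_single_subset hq
        rw [Finset.mem_singleton] at hq'
        subst hq'
        exact hxX
      · right
        apply Set.eq_of_subset_of_subset _ hYT
        intro x hx
        obtain ⟨hxQ, hxW⟩ := hx
        by_contra hxY
        apply hxW
        rw [h, stmt7_mem_idealOf]
        intro q hq
        have hq' := Finsupp.support_single_subset hq
        rw [Finset.mem_singleton] at hq'
        subst hq'
        exact hxY
    -- the stabilizing face
    set F : Set (Fin d → ℤ) := {p | p ∈ Qs ∧ ∀ x ∈ T, x + p ∈ T} with hF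
    have hFQ : F ⊆ Qs := fun p hp => hp.1
    have hF0 : (0 : Fin d → ℤ) ∈ F := ⟨Q.zero_mem, fun x hx => by simpa using hx⟩
    have hFadd : ∀ a ∈ F, ∀ b ∈ F, a + b ∈ F := by
      rintro a ⟨haQ, ha⟩ b ⟨hbQ, hb⟩
      refine ⟨Q.add_mem haQ hbQ, fun x hx => ?_⟩
      rw [← add_assoc]
      exact hb _ (ha x hx)
    have hFface : ∀ p ∈ Qs, ∀ q ∈ Qs, p + q ∈ F → p ∈ F := by
      rintro p hp q hq ⟨_, hpq⟩
      refine ⟨hp, fun x hx => ?_⟩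
      apply hTco (x + p) (AddSubmonoid.add_mem Q (hTQ hx) hp) q hq
      rw [add_assoc]
      exact hpq x hx
    obtain ⟨s, hs⟩ := hfg
    obtain ⟨lam, hlamnn, hFeq⟩ := stmt7_face Q s hs F hFQ hF0 hFadd hFface
    have hsQ : (↑s : Set (Fin d → ℤ)) ⊆ Qs := fun x hx => by
      rw [hQs, ← hs]; exact AddSubmonoid.subset_closure hx
    -- from a long extension, extract a single generator extension
    have hgenext : ∀ r ∈ Q, ∀ x ∈ T, x + r ∈ T → 0 < lam r →
        ∃ a ∈ s, 0 < lam a ∧ x + a ∈ T := by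
      intro r hr
      rw [← hs] at hr
      induction hr using AddSubmonoid.closure_induction with
      | mem a ha => exact fun x hx hxr hpos => ⟨a, ha, hpos, hxr⟩
      | zero => intro x hx hxr hpos; simp at hpos
      | add p q hp hq ihp ihq =>
        intro x hx hxq hpos
        have hpQ : p ∈ Q := by rw [← hs]; exact hp
        have hqQ : q ∈ Q := by rw [← hs]; exact hq
        have hxp : x + p ∈ T := by
          apply hTco (x + p) (AddSubmonoid.add_mem Q (hTQ hx) hpQ) q hqQ
          rwa [add_assoc]
        by_cases hlp : 0 < lam p
        · exact ihp x hx hxp hlp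
        · have hlp0 : lam p = 0 := le_antisymm (not_lt.mp hlp) (hlamnn p hpQ)
          have hlq : 0 < lam q := by
            rw [map_add, hlp0, zero_add] at hpos
            exact hpos
          obtain ⟨a, has, hapos, haT⟩ := ihq (x + p) hxp (by rw [add_assoc]; exact hxq) hlq
          refine ⟨a, has, hapos, ?_⟩
          have haQ : a ∈ Q := hsQ has
          apply hTco (x + a) (AddSubmonoid.add_mem Q (hTQ hx) haQ) p hpQ
          rw [show x + a + p = x + p + a by abel]
          exact haT
    -- maximal elements
    set M : Set (Fin d → ℤ) := {x | x ∈ T ∧ ∀ r ∈ Qs, x + r ∈ T → lam r = 0} with hM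
    set Mdown : Set (Fin d → ℤ) := {y | y ∈ Qs ∧ ∃ x ∈ M, ∃ r ∈ Qs, y + r = x} with hMdown
    have hMdownT : Mdown ⊆ T := by
      rintro y ⟨hy, x, hxM, r, hr, hyr⟩
      exact hTco y hy r hr (by rw [hyr]; exact hxM.1)
    have hMdownco : ∀ x ∈ Qs, ∀ r ∈ Qs, x + r ∈ Mdown → x ∈ Mdown := by
      rintro y hy r' hr' ⟨_, x, hxM, r, hr, hyr⟩
      exact ⟨hy, x, hxM, r' + r, AddSubmonoid.add_mem Q hr' hr, by rw [← add_assoc]; exact hyr⟩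
    set Ca : (Fin d → ℤ) → Set (Fin d → ℤ) := fun a => {x | x ∈ T ∧ x + a ∈ T} with hCa
    have hCaT : ∀ a, Ca a ⊆ T := fun a x hx => hx.1
    have hCaco : ∀ a ∈ Qs, ∀ x ∈ Qs, ∀ r ∈ Qs, x + r ∈ Ca a → x ∈ Ca a := by
      rintro a ha x hx r hr ⟨h1, h2⟩
      refine ⟨hTco x hx r hr h1, ?_⟩
      apply hTco (x + a) (AddSubmonoid.add_mem Q hx ha) r hr
      rw [show x + a + r = x + r + a by abel]
      exact h2
    -- T = Mdown by a finite-union argument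
    have hTMdown : T = Mdown := by
      set sPos : Finset (Fin d → ℤ) := s.filter (fun a => 0 < lam a) with hsPos
      have hcover : T ⊆ Mdown ∪ ⋃ a ∈ (sPos : Set (Fin d → ℤ)), Ca a := by
        intro x hx
        by_cases hcase : ∃ r ∈ Qs, x + r ∈ T ∧ 0 < lam r
        · obtain ⟨r, hr, hxr, hlr⟩ := hcase
          obtain ⟨a, has, hapos, haT⟩ := hgenext r hr x hx hxr hlr
          right
          refine Set.mem_biUnion (by exact Finset.mem_coe.mpr (Finset.mem_filter.mpr ⟨has, hapos⟩)) ⟨hx, haT⟩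
        · left
          push_neg at hcase
          refine ⟨hTQ hx, x, ⟨hx, ?_⟩, 0, Q.zero_mem, by simp⟩
          intro r hr hxr
          exact le_antisymm (hcase r hr hxr) (hlamnn r hr)
      -- finite unions of the Ca's
      have main : ∀ t : Finset (Fin d → ℤ), (↑t : Set (Fin d → ℤ)) ⊆ ↑sPos →
          T ⊆ Mdown ∪ ⋃ a ∈ (t : Set (Fin d → ℤ)), Ca a →
          T = Mdown ∨ ∃ a ∈ t, T = Ca a := by
        intro t
        induction t using Finset.induction_on with
        | empty =>
          intro _ hsub
          left
          apply Set.eq_of_subset_of_subset _ hMdownT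
          intro x hx
          rcases hsub hx with h | h
          · exact h
          · simp at h
        | insert a t hnotmem ih =>
          intro hsub hsub2
          have haQ : a ∈ Qs := hsQ (Finset.mem_filter.mp (hsub (by simp))).1
          set X : Set (Fin d → ℤ) := Mdown ∪ ⋃ b ∈ (t : Set (Fin d → ℤ)), Ca b with hX
          have hXco : ∀ x ∈ Qs, ∀ r ∈ Qs, x + r ∈ X → x ∈ X := by
            intro x hx r hr hxr
            rcases hxr with h | h
            · exact Or.inl (hMdownco x hx r hr h)
            · obtain ⟨b, hb, hmem⟩ := Set.mem_iUnion₂.mp h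
              have hbQ : b ∈ Qs := hsQ (Finset.mem_filter.mp (hsub (by simp [hb]))).1
              exact Or.inr (Set.mem_biUnion hb (hCaco b hbQ x hx r hr hmem))
          have hXT : X ⊆ T := by
            intro x hx
            rcases hx with h | h
            · exact hMdownT h
            · obtain ⟨b, _, hmem⟩ := Set.mem_iUnion₂.mp h
              exact hmem.1
          have hcover2 : T ⊆ X ∪ Ca a := by
            intro x hx
            rcases hsub2 hx with h | h
            · exact Or.inl (Or.inl h)
            · rw [Finset.coe_insert, Set.biUnion_insert] at h
              rcases h with h | h
              · exact Or.inr h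
              · exact Or.inl (Or.inr h)
          rcases hunion X (Ca a) hXco (hCaco a haQ) hXT (hCaT a) hcover2 with h | h
          · rcases ih (by intro b hb; exact hsub (by simp [hb])) (by rw [← h]) with h2 | h2
            · exact Or.inl h2
            · obtain ⟨b, hb, hb2⟩ := h2
              exact Or.inr ⟨b, by simp [hb], hb2⟩
          · exact Or.inr ⟨a, by simp, h⟩
      rcases main sPos (le_refl _) hcover with h | h
      · exact h
      · exfalso
        obtain ⟨a, ha, hTCa⟩ := h
        have hapos : 0 < lam a := (Finset.mem_filter.mp ha).2
        have haQ : a ∈ Qs := hsQ (Finset.mem_filter.mp ha).1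
        have haF : a ∈ F := by
          refine ⟨haQ, fun x hx => ?_⟩
          have : x ∈ Ca a := by rw [← hTCa]; exact hx
          exact this.2
        rw [hFeq] at haF
        have := haF.2
        omega
    -- pick a maximal element α
    obtain ⟨y0, hy0⟩ := hTne
    obtain ⟨_, α, hαM, _⟩ : y0 ∈ Mdown := by rw [← hTMdown]; exact hy0
    have hαT : α ∈ T := hαM.1
    have hαQ : α ∈ Qs := hTQ hαT
    set ZF : AddSubgroup (Fin d → ℤ) := AddSubgroup.closure F with hZF
    have hZFsub := stmt7_closure_sub F hF0 hFadd
    -- the principal co-ideal of α modulo F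
    set Sa : Set (Fin d → ℤ) := {y | y ∈ Qs ∧ ∃ z ∈ ZF, ∃ p ∈ Qs, y + p = α + z} with hSa
    have hSaT : Sa ⊆ T := by
      rintro y ⟨hy, z, hz, p, hp, hyp⟩
      obtain ⟨u, hu, w, hw, rfl⟩ := hZFsub z hz
      have h1 : α + u ∈ T := (hu.2 : _) α hαT  -- u ∈ F: stabilizes
      have h2 : y + (p + w) = α + u := by rw [← add_assoc, hyp]; abel
      have hpw : p + w ∈ Qs := AddSubmonoid.add_mem Q hp (hFQ hw)
      exact hTco y hy (p + w) hpw (by rw [h2]; exact h1)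
    have hSaco : ∀ x ∈ Qs, ∀ r ∈ Qs, x + r ∈ Sa → x ∈ Sa := by
      rintro y hy r hr ⟨_, z, hz, p, hp, hyp⟩
      exact ⟨hy, z, hz, r + p, AddSubmonoid.add_mem Q hr hp, by rw [← add_assoc]; exact hyp⟩
    set Ba : Set (Fin d → ℤ) := {y | y ∈ T ∧ ∃ β ∈ M, β ∉ (α +ᵥ (ZF : Set (Fin d → ℤ))) ∧
        ∃ z ∈ ZF, ∃ p ∈ Qs, y + p = β + z} with hBa
    have hBaT : Ba ⊆ T := fun y hy => hy.1
    have hBaco : ∀ x ∈ Qs, ∀ r ∈ Qs, x + r ∈ Ba → x ∈ Ba := by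
      rintro y hy r hr ⟨hyT, β, hβ, hβn, z, hz, p, hp, hyp⟩
      exact ⟨hTco y hy r hr hyT, β, hβ, hβn, z, hz, r + p, AddSubmonoid.add_mem Q hr hp,
        by rw [← add_assoc]; exact hyp⟩
    have hcoverSB : T ⊆ Sa ∪ Ba := by
      intro y hy
      have hyM : y ∈ Mdown := by rw [← hTMdown]; exact hy
      obtain ⟨hyQ, x, hxM, r, hr, hyr⟩ := hyM
      by_cases hx : x ∈ α +ᵥ (ZF : Set (Fin d → ℤ))
      · obtain ⟨z0, hz0, hxz⟩ := Set.mem_vadd_set.mp hx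
        rw [vadd_eq_add] at hxz
        exact Or.inl ⟨hyQ, z0, hz0, r, hr, by rw [hyr, ← hxz]⟩
      · exact Or.inr ⟨hy, x, hxM, hx, 0, AddSubgroup.zero_mem ZF, r, hr, by rw [hyr]; simp⟩
    have hTSa : T = Sa := by
      rcases hunion Sa Ba hSaco hBaco hSaT hBaT hcoverSB with h | h
      · exact h
      · exfalso
        have hαBa : α ∈ Ba := by rw [← h]; exact hαT
        obtain ⟨_, β, hβM, hβn, z, hz, p, hp, hαp⟩ := hαBa
        obtain ⟨u, hu, w, hw, rfl⟩ := hZFsub z hz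
        have hcomb : α + (p + w) = β + u := by rw [← add_assoc, hαp]; abel
        have hpwQ : p + w ∈ Qs := AddSubmonoid.add_mem Q hp (hFQ hw)
        have hβu : β + u ∈ T := (hu.2 : _) β hβM.1
        have hlam0 : lam (p + w) = 0 := hαM.2 (p + w) hpwQ (by rw [hcomb]; exact hβu)
        have hlp : lam p = 0 ∧ lam w = 0 := by
          have h1 : 0 ≤ lam p := hlamnn p hp
          have h2 : 0 ≤ lam w := hlamnn w (hFQ hw)
          rw [map_add] at hlam0
          omega
        have hpF : p ∈ F := by rw [hFeq]; exact ⟨hp, hlp.1⟩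
        apply hβn
        rw [Set.mem_vadd_set]
        refine ⟨p + w - u, ?_, ?_⟩
        · exact AddSubgroup.sub_mem ZF (AddSubgroup.add_mem ZF (AddSubgroup.subset_closure hpF)
            (AddSubgroup.subset_closure hw)) (AddSubgroup.subset_closure hu)
        · rw [vadd_eq_add, show α + (p + w - u) = α + (p + w) - u by abel, hcomb]
          abel
    -- assemble the result
    refine ⟨F, α, ⟨lam, hlamnn, hFeq⟩, ?_, ?_⟩
    · exact ⟨α, Set.mem_vadd_set.mpr ⟨0, AddSubgroup.zero_mem _, by simp⟩, hαQ⟩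
    · rw [stmt7_span_eq, hWchar]
      ext f
      constructor
      · intro h q hq
        have h1 := h q hq
        intro hmem
        -- q ∈ α +ᵥ (F - Qs) → single q 1 ∈ ... contradiction via T = Sa
        obtain ⟨v, hv, hαv⟩ := Set.mem_vadd_set.mp hmem
        obtain ⟨u, hu, w, hwQ, hvuw⟩ := Set.mem_sub.mp hv
        rw [vadd_eq_add] at hαv
        have hqSa : (q : Fin d → ℤ) ∈ Sa := by
          refine ⟨q.2, u, AddSubgroup.subset_closure hu, w, hwQ, ?_⟩
          rw [← hαv, ← hvuw]
          abel
        have hqT : (q : Fin d → ℤ) ∈ T := by rw [hTSa]; exact hqSa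
        exact ((hsingleT q).mp hqT) h1
      · intro h q hq
        by_contra hW'
        have hqT : (q : Fin d → ℤ) ∈ T := (hsingleT q).mpr hW'
        have hqSa : (q : Fin d → ℤ) ∈ Sa := by rw [← hTSa]; exact hqT
        obtain ⟨hqQ, z, hz, p, hp, hqp⟩ := hqSa
        obtain ⟨u, hu, w, hw, rfl⟩ := hZFsub z hz
        apply h q hq
        rw [Set.mem_vadd_set]
        refine ⟨u - (w + p), Set.mem_sub.mpr ⟨u, hu, w + p,
          AddSubmonoid.add_mem Q (hFQ hw) hp, rfl⟩, ?_⟩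
        rw [vadd_eq_add]
        have : (q : Fin d → ℤ) + p = α + u - w := by rw [hqp]; abel
        rw [show α + (u - (w + p)) = (α + u - w) - p by abel, ← this]
        abel
  · -- standard form → irreducible
    rintro ⟨F, α, ⟨lam, hlamnn, hFeq⟩, hne, hW⟩
    have hFQ : F ⊆ Qs := by
      rw [hFeq]; rintro x ⟨h1, _⟩; exact h1
    have hF0 : (0 : Fin d → ℤ) ∈ F := by
      rw [hFeq]; exact ⟨Q.zero_mem, map_zero lam⟩
    have hFadd : ∀ a ∈ F, ∀ b ∈ F, a + b ∈ F := by
      intro a ha b hb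
      rw [hFeq] at ha hb ⊢
      exact ⟨Q.add_mem ha.1 hb.1, by rw [map_add, ha.2, hb.2, add_zero]⟩
    have hlamF : ∀ u ∈ F, lam u = 0 := by
      intro u hu; rw [hFeq] at hu; exact hu.2
    have hFmem : ∀ x, x ∈ Qs → lam x = 0 → x ∈ F := by
      intro x h1 h2; rw [hFeq]; exact ⟨h1, h2⟩
    set S : Set ↥Q := {q : ↥Q | (q : Fin d → ℤ) ∈ α +ᵥ (F - Qs)} with hS
    have hWS : ∀ f : AddMonoidAlgebra k ↥Q, f ∈ W ↔ ∀ q ∈ f.coeff.support, q ∉ S := by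
      intro f
      constructor
      · intro hf q hq
        have hmem : f ∈ (W : Set (AddMonoidAlgebra k ↥Q)) := hf
        rw [hW, stmt7_span_eq] at hmem
        exact hmem q hq
      · intro h
        have hmem : f ∈ {f : AddMonoidAlgebra k ↥Q |
            ∀ q ∈ f.coeff.support, (q : Fin d → ℤ) ∉ α +ᵥ (F - Qs)} := h
        rw [← stmt7_span_eq k Q (fun q : ↥Q => (q : Fin d → ℤ) ∉ α +ᵥ (F - Qs)), ← hW] at hmem
        exact hmem
    have hSco : ∀ q r : ↥Q, q + r ∈ S → q ∈ S := by
      intro q r hqr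
      obtain ⟨v, hv, hαv⟩ := Set.mem_vadd_set.mp hqr
      obtain ⟨u, hu, w, hwQ, hvuw⟩ := Set.mem_sub.mp hv
      rw [vadd_eq_add, ← hvuw, AddSubmonoid.coe_add] at hαv
      rw [hS, Set.mem_setOf_eq, Set.mem_vadd_set]
      refine ⟨u - (w + (r : Fin d → ℤ)), Set.mem_sub.mpr
        ⟨u, hu, w + (r : Fin d → ℤ), Q.add_mem hwQ r.2, rfl⟩, ?_⟩
      rw [vadd_eq_add, show α + (u - (w + (r : Fin d → ℤ))) = α + (u - w) - (r : Fin d → ℤ) by abel,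
        hαv]
      abel
    -- Lemma C: pushing a nonzero class to the top layer
    have lemC : ∀ f : AddMonoidAlgebra k ↥Q, f ∉ W →
        ∃ t : AddMonoidAlgebra k ↥Q, t ≠ 0 ∧
          (∀ q ∈ t.coeff.support, ∃ u ∈ F, ∃ w ∈ F, (q : Fin d → ℤ) = α + (u - w)) ∧
          (∀ I : Ideal (AddMonoidAlgebra k ↥Q), W ≤ I → f ∈ I → t ∈ I) := by
      intro f hf
      have hTne : (f.coeff.support.filter (· ∈ S)).Nonempty := by
        rw [hWS] at hf
        push_neg at hf
        obtain ⟨q, hq, hqS⟩ := hf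
        exact ⟨q, Finset.mem_filter.mpr ⟨hq, hqS⟩⟩
      obtain ⟨q₀, hq₀, hq₀min⟩ :=
        Finset.exists_min_image _ (fun q : ↥Q => lam (q : Fin d → ℤ)) hTne
      have hq₀f : q₀ ∈ f.coeff.support := (Finset.mem_filter.mp hq₀).1
      have hq₀S : q₀ ∈ S := (Finset.mem_filter.mp hq₀).2
      obtain ⟨v₀, hv₀, hαv₀⟩ := Set.mem_vadd_set.mp hq₀S
      obtain ⟨u₀, hu₀, w₀, hw₀Q, hv₀eq⟩ := Set.mem_sub.mp hv₀
      rw [vadd_eq_add, ← hv₀eq] at hαv₀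
      set p₀ : ↥Q := ⟨w₀, hw₀Q⟩ with hp₀
      set g : AddMonoidAlgebra k ↥Q := AddMonoidAlgebra.single p₀ (1 : k) * f with hg
      have happly : ∀ x : ↥Q, g.coeff (p₀ + x) = f.coeff x := by
        intro x
        rw [hg]
        have hcanc : ∀ a : ↥Q, p₀ + a = p₀ + x ↔ a = x := by
          intro a
          constructor
          · intro h
            apply Subtype.ext
            have h2 := congrArg (Subtype.val) h
            rw [AddSubmonoid.coe_add, AddSubmonoid.coe_add] at h2
            exact add_left_cancel h2
          · rintro rfl; rfl
        rw [AddMonoidAlgebra.coeff_single_mul_eq_mul_coeff x (fun a _ => hcanc a), one_mul]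
      have hsuppg : ∀ q' ∈ g.coeff.support, ∃ q ∈ f.coeff.support, q' = p₀ + q := by
        intro q' hq'
        rw [hg] at hq'
        obtain ⟨q₁, hq₁, q₂, hq₂, h12⟩ := Finset.mem_add.mp
          (AddMonoidAlgebra.support_coeff_mul_subset (AddMonoidAlgebra.single p₀ (1 : k)) f hq')
        have hq₁p : q₁ = p₀ := Finset.mem_singleton.mp (Finsupp.support_single_subset hq₁)
        exact ⟨q₂, hq₂, by rw [← h12, hq₁p]⟩
      set t : AddMonoidAlgebra k ↥Q := AddMonoidAlgebra.ofCoeff (Finsupp.filter (· ∈ S) g.coeff) with ht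
      have htsupp : t.coeff.support = g.coeff.support.filter (· ∈ S) := Finsupp.support_filter _ _
      have hq₀pS : (p₀ + q₀ : ↥Q) ∈ S := by
        rw [hS, Set.mem_setOf_eq, Set.mem_vadd_set]
        refine ⟨u₀ - 0, Set.mem_sub.mpr ⟨u₀, hu₀, 0, Q.zero_mem, rfl⟩, ?_⟩
        rw [vadd_eq_add, AddSubmonoid.coe_add]
        show α + (u₀ - 0) = w₀ + (q₀ : Fin d → ℤ)
        rw [← hαv₀]; abel
      have hmemt : (p₀ + q₀ : ↥Q) ∈ t.coeff.support := by
        rw [htsupp, Finset.mem_filter]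
        refine ⟨?_, hq₀pS⟩
        rw [Finsupp.mem_support_iff, happly q₀]
        exact Finsupp.mem_support_iff.mp hq₀f
      refine ⟨t, by intro h0; rw [h0] at hmemt; simp at hmemt, ?_, ?_⟩
      · -- the support of t lies in the top layer
        intro q' hq'
        rw [htsupp, Finset.mem_filter] at hq'
        obtain ⟨hq'g, hq'S⟩ := hq'
        obtain ⟨q, hqf, rfl⟩ := hsuppg q' hq'g
        have hqS : q ∈ S := hSco q p₀ (by rwa [add_comm q p₀])
        have hqfil : q ∈ f.coeff.support.filter (· ∈ S) := Finset.mem_filter.mpr ⟨hqf, hqS⟩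
        have hqmin : lam (q₀ : Fin d → ℤ) ≤ lam (q : Fin d → ℤ) := hq₀min q hqfil
        obtain ⟨v', hv', hαv'⟩ := Set.mem_vadd_set.mp hq'S
        obtain ⟨u', hu', w', hw'Q, hv'eq⟩ := Set.mem_sub.mp hv'
        rw [vadd_eq_add, ← hv'eq, AddSubmonoid.coe_add] at hαv'
        -- lam computations
        have l0 : lam α + (0 - lam w₀) = lam (q₀ : Fin d → ℤ) := by
          rw [← hlamF u₀ hu₀, ← map_sub, ← map_add]
          exact congrArg lam hαv₀
        have l1 : lam α + (0 - lam w') = lam w₀ + lam (q : Fin d → ℤ) := by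
          rw [← hlamF u' hu', ← map_sub, ← map_add, ← map_add]
          exact congrArg lam hαv'
        have l2 : 0 ≤ lam w' := hlamnn w' hw'Q
        have hw'0 : lam w' = 0 := by omega
        refine ⟨u', hu', w', hFmem w' hw'Q hw'0, ?_⟩
        rw [AddSubmonoid.coe_add, ← hαv']
      · -- t is obtained from f multiplicatively, modulo W
        intro I hWI hfI
        have hgI : g ∈ I := by rw [hg]; exact Ideal.mul_mem_left I _ hfI
        set tneg : AddMonoidAlgebra k ↥Q := AddMonoidAlgebra.ofCoeff (Finsupp.filter (fun q => ¬ q ∈ S) g.coeff) with htneg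
        have hsplit : t + tneg = g := AddMonoidAlgebra.coeff_injective (by
            rw [AddMonoidAlgebra.coeff_add]; exact Finsupp.filter_pos_add_filter_neg g.coeff _)
        have hnegW : tneg ∈ W := by
          rw [hWS]
          intro q hq
          rw [htneg, AddMonoidAlgebra.coeff_ofCoeff, Finsupp.support_filter, Finset.mem_filter] at hq
          exact hq.2
        have htg : t = g - tneg := eq_sub_of_add_eq hsplit
        rw [htg]
        exact Submodule.sub_mem I hgI (hWI hnegW)
    -- main irreducibility argument
    intro I₁ I₂ hWI
    by_contra hcon
    push_neg at hcon
    obtain ⟨hne1, hne2⟩ := hcon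
    have hle1 : W ≤ I₁ := hWI ▸ inf_le_left
    have hle2 : W ≤ I₂ := hWI ▸ inf_le_right
    obtain ⟨f₁, hf₁I, hf₁W⟩ := SetLike.exists_of_lt (lt_of_le_of_ne hle1 hne1)
    obtain ⟨f₂, hf₂I, hf₂W⟩ := SetLike.exists_of_lt (lt_of_le_of_ne hle2 hne2)
    obtain ⟨t₁, ht₁0, ht₁top, ht₁I⟩ := lemC f₁ hf₁W
    obtain ⟨t₂, ht₂0, ht₂top, ht₂I⟩ := lemC f₂ hf₂W
    have ht₁I₁ : t₁ ∈ I₁ := ht₁I I₁ hle1 hf₁I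
    have ht₂I₂ : t₂ ∈ I₂ := ht₂I I₂ hle2 hf₂I
    set U : Finset ↥Q := t₁.coeff.support ∪ t₂.coeff.support with hU
    have hUtop : ∀ q : ↥Q, q ∈ U → ∃ u ∈ F, ∃ w ∈ F, (q : Fin d → ℤ) = α + (u - w) := by
      intro q hq
      rcases Finset.mem_union.mp hq with h | h
      · exact ht₁top q h
      · exact ht₂top q h
    choose uf huf wf hwf heqf using hUtop
    set gstar : Fin d → ℤ := ∑ q ∈ U.attach, wf q.1 q.2 with hgstar
    have hsumF : ∀ (tt : Finset {x // x ∈ U}) (φ : {x // x ∈ U} → Fin d → ℤ),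
        (∀ i ∈ tt, φ i ∈ F) → ∑ i ∈ tt, φ i ∈ F := by
      intro tt φ h
      exact Finset.sum_induction φ (· ∈ F) (fun a b ha hb => hFadd a ha b hb) hF0 h
    have hkey : ∀ q : ↥Q, ∀ hq : q ∈ U, (q : Fin d → ℤ) - α + gstar ∈ F := by
      intro q hq
      have hsplitg : gstar = wf q hq + ∑ i ∈ U.attach.erase ⟨q, hq⟩, wf i.1 i.2 := by
        rw [hgstar, Finset.add_sum_erase _ (fun i : {x // x ∈ U} => wf i.1 i.2)
          (Finset.mem_attach U ⟨q, hq⟩)]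
      have hrest : ∑ i ∈ U.attach.erase ⟨q, hq⟩, wf i.1 i.2 ∈ F :=
        hsumF _ _ (fun i _ => hwf i.1 i.2)
      have hrw : (q : Fin d → ℤ) - α + gstar
          = uf q hq + ∑ i ∈ U.attach.erase ⟨q, hq⟩, wf i.1 i.2 := by
        rw [heqf q hq, hsplitg]; abel
      rw [hrw]
      exact hFadd _ (huf q hq) _ hrest
    have hσQ : ∀ q : ↥Q, ∀ hq : q ∈ U, (q : Fin d → ℤ) - α + gstar ∈ Q :=
      fun q hq => hFQ (hkey q hq)
    set σ : {x // x ∈ U} → ↥Q := fun q => ⟨(q.1 : Fin d → ℤ) - α + gstar, hσQ q.1 q.2⟩ with hσ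
    set a : AddMonoidAlgebra k ↥Q := ∑ q ∈ t₂.coeff.support.attach,
      AddMonoidAlgebra.single (σ ⟨q.1, Finset.mem_union_right _ q.2⟩) (t₂.coeff q.1) with ha
    set b : AddMonoidAlgebra k ↥Q := ∑ q ∈ t₁.coeff.support.attach,
      AddMonoidAlgebra.single (σ ⟨q.1, Finset.mem_union_left _ q.2⟩) (t₁.coeff q.1) with hb
    have hexp1 : t₁ = ∑ q ∈ t₁.coeff.support.attach, AddMonoidAlgebra.single (q.1 : ↥Q) (t₁.coeff q.1) := by
      rw [Finset.sum_attach t₁.coeff.support (fun q => AddMonoidAlgebra.single q (t₁.coeff q))]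
      exact (AddMonoidAlgebra.sum_coeff_single t₁).symm
    have hexp2 : t₂ = ∑ q ∈ t₂.coeff.support.attach, AddMonoidAlgebra.single (q.1 : ↥Q) (t₂.coeff q.1) := by
      rw [Finset.sum_attach t₂.coeff.support (fun q => AddMonoidAlgebra.single q (t₂.coeff q))]
      exact (AddMonoidAlgebra.sum_coeff_single t₂).symm
    have hab : a * t₁ = b * t₂ := by
      conv_lhs => rw [hexp1]
      conv_rhs => rw [hexp2]
      rw [ha, hb]
      rw [Finset.sum_mul_sum, Finset.sum_mul_sum]
      conv_lhs => rw [Finset.sum_comm]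
      apply Finset.sum_congr rfl
      intro q' _
      apply Finset.sum_congr rfl
      intro q _
      rw [AddMonoidAlgebra.single_mul_single, AddMonoidAlgebra.single_mul_single]
      congr 1
      · apply Subtype.ext
        rw [AddSubmonoid.coe_add, AddSubmonoid.coe_add]
        show ((q.1 : Fin d → ℤ) - α + gstar) + (q'.1 : Fin d → ℤ)
          = ((q'.1 : Fin d → ℤ) - α + gstar) + (q.1 : Fin d → ℤ)
        abel
      · exact mul_comm _ _
    -- a is nonzero
    obtain ⟨qq, hqq⟩ := Finsupp.support_nonempty_iff.mpr (mt AddMonoidAlgebra.coeff_eq_zero.mp ht₂0)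
    have haval : a.coeff (σ ⟨qq, Finset.mem_union_right _ hqq⟩) = t₂.coeff qq := by
      rw [ha, AddMonoidAlgebra.coeff_sum, Finset.sum_apply']
      rw [Finset.sum_eq_single (⟨qq, hqq⟩ : {x // x ∈ t₂.coeff.support})]
      · rw [AddMonoidAlgebra.coeff_single, Finsupp.single_apply, if_pos rfl]
      · intro q _ hqne
        rw [AddMonoidAlgebra.coeff_single, Finsupp.single_apply, if_neg]
        intro hcontra
        apply hqne
        apply Subtype.ext
        have h2 := congrArg (Subtype.val) hcontra
        simp only [hσ] at h2
        have h3 : (q.1 : Fin d → ℤ) = (qq : Fin d → ℤ) := by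
          have := congrFun h2
          funext i
          have h4 := congrFun h2 i
          simpa using h4
        exact Subtype.ext h3
      · intro h
        exact absurd (Finset.mem_attach _ _) h
    have ha0 : a ≠ 0 := by
      intro h
      rw [h] at haval
      exact (Finsupp.mem_support_iff.mp hqq) (by simpa using haval.symm)
    have hιinj : Function.Injective (AddMonoidAlgebra.mapDomainRingHom k Q.subtype) :=
      AddMonoidAlgebra.mapDomain_injective Subtype.coe_injective
    have hne0 : a * t₁ ≠ 0 := by
      intro h
      have hmul : (AddMonoidAlgebra.mapDomainRingHom k Q.subtype) a
          * (AddMonoidAlgebra.mapDomainRingHom k Q.subtype) t₁ = 0 := by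
        rw [← map_mul, h, map_zero]
      rcases mul_eq_zero.mp hmul with h' | h'
      · exact ha0 (hιinj (by rw [h', map_zero]))
      · exact ht₁0 (hιinj (by rw [h', map_zero]))
    -- the support of a * t₁ lies in S
    have hsuppS : ∀ q'' ∈ (a * t₁).coeff.support, q'' ∈ S := by
      intro q'' hq''
      obtain ⟨qa, hqa, q', hq', hsum⟩ := Finset.mem_add.mp
        (AddMonoidAlgebra.support_coeff_mul_subset a t₁ hq'')
      have hqaform : ∃ qU : {x // x ∈ t₂.coeff.support}, qa = σ ⟨qU.1, Finset.mem_union_right _ qU.2⟩ := by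
        rw [ha, AddMonoidAlgebra.coeff_sum] at hqa
        obtain ⟨q, hqmem, hqsupp⟩ := Finset.mem_biUnion.mp (Finsupp.support_finset_sum hqa)
        exact ⟨q, Finset.mem_singleton.mp (Finsupp.support_single_subset hqsupp)⟩
      obtain ⟨qU, rfl⟩ := hqaform
      obtain ⟨u', hu', w', hw', heq'⟩ := ht₁top q' hq'
      rw [hS, Set.mem_setOf_eq, Set.mem_vadd_set]
      refine ⟨((qU.1 : Fin d → ℤ) - α + gstar + u') - w', Set.mem_sub.mpr
        ⟨(qU.1 : Fin d → ℤ) - α + gstar + u',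
          hFadd _ (hkey qU.1 (Finset.mem_union_right _ qU.2)) _ hu', w', hFQ hw', rfl⟩, ?_⟩
      rw [vadd_eq_add, ← hsum, AddSubmonoid.coe_add]
      show α + ((qU.1 : Fin d → ℤ) - α + gstar + u' - w')
        = ((qU.1 : Fin d → ℤ) - α + gstar) + (q'  : Fin d → ℤ)
      rw [heq']
      abel
    -- contradiction
    have hmemW2 : a * t₁ ∈ W := by
      rw [hWI]
      rw [Submodule.mem_inf]
      exact ⟨Ideal.mul_mem_left I₁ a ht₁I₁, by rw [hab]; exact Ideal.mul_mem_left I₂ b ht₂I₂⟩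
    rw [hWS] at hmemW2
    obtain ⟨q'', hq''⟩ := Finsupp.support_nonempty_iff.mpr (mt AddMonoidAlgebra.coeff_eq_zero.mp hne0)
    exact hmemW2 q'' hq'' (hsuppS q'' hq'')
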